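/- Let ρ > 0 and m ≥ 1. For every compact set Q ⊂ ℝ of Lebesgue measure 2ρ and every monic real polynomial P of degree m, sup_{x ∈ Q} |P(x)| ≥ 2 (ρ/2)^m; equivalently, the infimum over monic degree-m polynomials of the sup-norm on Q is at least 2(ρ/2)^m, with equality (of the infimum) when Q is a segment of length 2ρ. -/

import Mathlib

open Real MeasureTheory Polynomial


lemma cheb_aux : ∀ n : ℕ, (Polynomial.Chebyshev.T ℝ n).natDegree ≤ n ∧
    (Polynomial.Chebyshev.T ℝ (n+1)).natDegree ≤ n+1 ∧
    (Polynomial.Chebyshev.T ℝ (n+1)).coeff (n+1) = 2^n := by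
  intro n
  induction n with
  | zero => simp [Polynomial.Chebyshev.T_zero, Polynomial.Chebyshev.T_one]
  | succ n ih =>
    obtain ⟨h0, h1, h2⟩ := ih
    have hT : Polynomial.Chebyshev.T ℝ ((n:ℤ)+2) =
        2 * X * Polynomial.Chebyshev.T ℝ ((n:ℤ)+1) - Polynomial.Chebyshev.T ℝ n :=
      Polynomial.Chebyshev.T_add_two ℝ (n : ℤ)
    have hdmul : (2 * X * Polynomial.Chebyshev.T ℝ ((n:ℤ)+1)).natDegree ≤ n + 2 := by
      refine le_trans (natDegree_mul_le) ?_
      have : (2 * X : ℝ[X]).natDegree ≤ 1 := by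
        refine le_trans (natDegree_mul_le) ?_
        simp
      omega
    constructor
    · exact h1
    constructor
    · have hcast : ((n+1:ℕ):ℤ) + 1 = (n:ℤ) + 2 := by push_cast; ring
      rw [hcast, hT]
      refine le_trans (natDegree_sub_le _ _) ?_
      simp only [max_le_iff]
      exact ⟨hdmul, by omega⟩
    · have hcast : ((n+1:ℕ):ℤ) + 1 = (n:ℤ) + 2 := by push_cast; ring
      rw [hcast, hT, Polynomial.coeff_sub]
      show _ - _ = (2:ℝ)^(n+1)
      have hzero : (Polynomial.Chebyshev.T ℝ n).coeff (n+2) = 0 :=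
        Polynomial.coeff_eq_zero_of_natDegree_lt (by omega)
      have : (2 * X * Polynomial.Chebyshev.T ℝ ((n:ℤ)+1)).coeff (n+2)
          = 2 * (Polynomial.Chebyshev.T ℝ ((n:ℤ)+1)).coeff (n+1) := by
        rw [show (2 * X * Polynomial.Chebyshev.T ℝ ((n:ℤ)+1)) =
            Polynomial.C 2 * (X * Polynomial.Chebyshev.T ℝ ((n:ℤ)+1)) by
          rw [show ((2:ℝ[X])) = Polynomial.C 2 from (map_ofNat Polynomial.C 2).symm]; ring]
        rw [Polynomial.coeff_C_mul, Polynomial.coeff_X_mul]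
      rw [this, hzero, h2]
      ring

lemma cheb_natDegree {n : ℕ} (hn : 1 ≤ n) : (Polynomial.Chebyshev.T ℝ n).natDegree = n := by
  obtain ⟨k, rfl⟩ := Nat.exists_eq_add_of_le hn
  have h := cheb_aux k
  have hle := h.2.1
  have hc := h.2.2
  have : ((k:ℤ)+1) = ((1 + k : ℕ) : ℤ) := by push_cast; ring
  rw [this] at hle hc
  rw [show (1+k) = k+1 by ring] at hle hc ⊢
  refine le_antisymm hle (Polynomial.le_natDegree_of_ne_zero ?_)
  rw [hc]; positivity

lemma cheb_leadingCoeff {n : ℕ} (hn : 1 ≤ n) :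
    (Polynomial.Chebyshev.T ℝ n).leadingCoeff = 2^(n-1) := by
  obtain ⟨k, rfl⟩ := Nat.exists_eq_add_of_le hn
  have h := (cheb_aux k).2.2
  have : ((k:ℤ)+1) = ((1 + k : ℕ) : ℤ) := by push_cast; ring
  rw [this] at h
  rw [Polynomial.leadingCoeff, cheb_natDegree hn]
  rw [show (1+k) = k+1 by ring] at h ⊢
  simpa using h

noncomputable def chebScaled (m : ℕ) (e s : ℝ) : ℝ[X] :=
  Polynomial.C (2*(s/2)^m) *
    (Polynomial.Chebyshev.T ℝ m).comp (Polynomial.C s⁻¹ * (X - Polynomial.C e))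

lemma chebScaled_eval (m : ℕ) (e s : ℝ) (x : ℝ) :
    (chebScaled m e s).eval x = 2*(s/2)^m * (Polynomial.Chebyshev.T ℝ m).eval ((x - e)/s) := by
  simp [chebScaled, div_eq_inv_mul, mul_comm]

lemma lin_natDegree (e s : ℝ) (hs : s ≠ 0) :
    (Polynomial.C s⁻¹ * (X - Polynomial.C e)).natDegree = 1 := by
  rw [Polynomial.natDegree_C_mul (by simpa using hs), Polynomial.natDegree_X_sub_C]

lemma chebScaled_monic (m : ℕ) (hm : 1 ≤ m) (e s : ℝ) (hs : 0 < s) :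
    (chebScaled m e s).Monic := by
  have hq : (Polynomial.C s⁻¹ * (X - Polynomial.C e)).natDegree = 1 := lin_natDegree e s hs.ne'
  have hqlc : (Polynomial.C s⁻¹ * (X - Polynomial.C e)).leadingCoeff = s⁻¹ := by
    rw [Polynomial.leadingCoeff_mul, Polynomial.leadingCoeff_C,
      (Polynomial.monic_X_sub_C e).leadingCoeff, mul_one]
  unfold chebScaled
  unfold Polynomial.Monic
  rw [Polynomial.leadingCoeff_mul, Polynomial.leadingCoeff_C,
    Polynomial.leadingCoeff_comp (by rw [hq]; norm_num), hqlc, cheb_leadingCoeff hm,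
    cheb_natDegree hm]
  rw [div_pow, inv_pow]
  rw [show (2:ℝ)^(m-1) = 2^m / 2 by
    rw [eq_div_iff (by norm_num), ← pow_succ]; congr 1; omega]
  field_simp

lemma chebScaled_natDegree (m : ℕ) (hm : 1 ≤ m) (e s : ℝ) (hs : 0 < s) :
    (chebScaled m e s).natDegree = m := by
  have h := (chebScaled_monic m hm e s hs).ne_zero
  unfold chebScaled at h ⊢
  rw [Polynomial.natDegree_mul (fun hC => h (by rw [hC]; ring)) (fun hC => h (by rw [hC]; ring)),
    Polynomial.natDegree_C, Polynomial.natDegree_comp, cheb_natDegree hm,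
    lin_natDegree e s hs.ne']
  ring

lemma chebScaled_eval_cos (m : ℕ) (e s : ℝ) (hs : s ≠ 0) (θ : ℝ) :
    (chebScaled m e s).eval (e + s * Real.cos θ) = 2*(s/2)^m * Real.cos (m * θ) := by
  rw [chebScaled_eval]
  have : (e + s * Real.cos θ - e)/s = Real.cos θ := by field_simp; ring
  rw [this, Polynomial.Chebyshev.T_real_cos θ (m:ℤ)]
  norm_num

lemma ivt_sign {f : ℝ → ℝ} (hf : Continuous f) {a b : ℝ} (hab : a < b)
    (h : f a * f b < 0) : ∃ r ∈ Set.Ioo a b, f r = 0 := by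
  rcases lt_or_ge (f a) 0 with h1 | h1
  · have h2 : 0 < f b := by nlinarith
    have := intermediate_value_Ioo hab.le (hf.continuousOn (s := Set.Icc a b))
    obtain ⟨r, hr, hr0⟩ := this (Set.mem_Ioo.2 ⟨h1, h2⟩)
    exact ⟨r, hr, hr0⟩
  · have h2 : f b < 0 := by nlinarith
    have h1' : 0 < f a := by rcases h1.lt_or_eq with h | h; exact h; nlinarith
    have := intermediate_value_Ioo' hab.le (hf.continuousOn (s := Set.Icc a b))
    obtain ⟨r, hr, hr0⟩ := this (Set.mem_Ioo.2 ⟨h2, h1'⟩)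
    exact ⟨r, hr, hr0⟩

/-- Chebyshev lower bound on an interval: any monic poly of degree m has sup at least
`2 ((d-c)/4)^m` on `[c,d]`. -/
lemma cheb_lower (m : ℕ) (hm : 1 ≤ m) (c d : ℝ) (h : c < d) (R : ℝ[X]) (hR : R.Monic)
    (hdeg : R.natDegree = m) : ∃ x ∈ Set.Icc c d, 2 * ((d - c)/4)^m ≤ |R.eval x| := by
  by_contra hcon
  push_neg at hcon
  set s : ℝ := (d - c)/2 with hs_def
  have hs : 0 < s := by simp [hs_def]; linarith
  set e : ℝ := (c + d)/2 with he_def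
  set β : ℝ := 2 * (s/2)^m with hβ_def
  have hββ : β = 2 * ((d - c)/4)^m := by
    rw [hβ_def, hs_def]; ring_nf
  have hβpos : 0 < β := by positivity
  set Cp : ℝ[X] := chebScaled m e s with hCp_def
  -- alternation points
  set x : ℕ → ℝ := fun k => e + s * Real.cos (k * π / m) with hx_def
  have hm0 : (m:ℝ) ≠ 0 := by positivity
  have hθmem : ∀ k : ℕ, k ≤ m → (k * π / m : ℝ) ∈ Set.Icc 0 π := by
    intro k hk
    constructor
    · positivity
    · rw [div_le_iff₀ (by positivity)]
      have : (k:ℝ) ≤ m := by exact_mod_cast hk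
      nlinarith [Real.pi_pos]
  have hxmem : ∀ k : ℕ, x k ∈ Set.Icc c d := by
    intro k
    have h1 := Real.neg_one_le_cos (k * π / m : ℝ)
    have h2 := Real.cos_le_one (k * π / m : ℝ)
    constructor
    · simp only [hx_def, he_def, hs_def]; nlinarith
    · simp only [hx_def, he_def, hs_def]; nlinarith
  have hxlt : ∀ k l : ℕ, k < l → l ≤ m → x l < x k := by
    intro k l hkl hl
    have h1 : (k * π / m : ℝ) < l * π / m := by
      have hk : (k:ℝ) < l := by exact_mod_cast hkl
      have hmpos : (0:ℝ) < m := by positivity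
      have hπ := Real.pi_pos
      gcongr
    have h2 : Real.cos (l * π / m) < Real.cos (k * π / m) :=
      Real.cos_lt_cos_of_nonneg_of_le_pi (hθmem k (le_of_lt (lt_of_lt_of_le hkl hl))).1
        (hθmem l hl).2 h1
    simp only [hx_def]
    nlinarith
  have hCpval : ∀ k : ℕ, Cp.eval (x k) = β * (-1)^k := by
    intro k
    show Cp.eval (e + s * Real.cos (k * π / m)) = β * (-1)^k
    rw [hCp_def, chebScaled_eval_cos m e s hs.ne']
    have h1 : (m : ℝ) * (k * π / m) = 0 + k * π := by field_simp; ring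
    rw [h1, Real.cos_add_nat_mul_pi 0 k]
    simp [hβ_def]
  have hxle : ∀ k l : ℕ, k ≤ l → l ≤ m → x l ≤ x k := by
    intro k l hkl hl
    rcases hkl.lt_or_eq with h' | h'
    · exact (hxlt k l h' hl).le
    · rw [h']
  have hcon' : ∀ z ∈ Set.Icc c d, |R.eval z| < β := by
    intro z hz; rw [hββ]; exact hcon z hz
  set D : ℝ[X] := Cp - R with hD_def
  have hCpmonic := chebScaled_monic m hm e s hs
  have hCpdeg := chebScaled_natDegree m hm e s hs
  have hDne : D ≠ 0 := by
    intro h0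
    have hRC : R = Cp := by
      have := sub_eq_zero.mp h0
      exact this.symm
    have h1 := hcon' (x 0) (hxmem 0)
    rw [hRC, hCpval 0, pow_zero, mul_one] at h1
    rw [abs_of_pos hβpos] at h1
    exact lt_irrefl _ h1
  have hDdeg : D.natDegree < m := by
    have hdeg : D.degree < (m : ℕ) := by
      have h1 : Cp.degree = R.degree := by
        rw [Polynomial.degree_eq_natDegree hCpmonic.ne_zero,
          Polynomial.degree_eq_natDegree hR.ne_zero, hCpdeg, hdeg]
      have h2 := Polynomial.degree_sub_lt h1 hCpmonic.ne_zero (by rw [hCpmonic, hR])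
      rw [Polynomial.degree_eq_natDegree hCpmonic.ne_zero, hCpdeg] at h2
      exact h2
    rwa [← Polynomial.natDegree_lt_iff_degree_lt hDne] at hdeg
  have hsign : ∀ k : ℕ, k ≤ m → 0 < (-1:ℝ)^k * D.eval (x k) := by
    intro k hk
    have habs : |R.eval (x k)| < β := hcon' (x k) (hxmem k)
    have hDev : D.eval (x k) = β * (-1)^k - R.eval (x k) := by
      rw [hD_def, Polynomial.eval_sub, hCpval k]
    rw [hDev]
    have ht2 : ((-1:ℝ)^k) * ((-1:ℝ)^k) = 1 := by
      rw [← pow_add]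
      exact Even.neg_one_pow ⟨k, rfl⟩
    have hle : (-1:ℝ)^k * R.eval (x k) ≤ |R.eval (x k)| := by
      calc (-1:ℝ)^k * R.eval (x k) ≤ |(-1:ℝ)^k * R.eval (x k)| := le_abs_self _
        _ = |R.eval (x k)| := by rw [abs_mul, abs_pow, abs_neg, abs_one, one_pow, one_mul]
    nlinarith
  have hchoice : ∀ k : Fin m, ∃ r ∈ Set.Ioo (x (k+1)) (x k), D.eval r = 0 := by
    intro k
    have hk1 : (k:ℕ) + 1 ≤ m := k.2
    have hA := hsign k (le_of_lt (lt_of_lt_of_le (Nat.lt_succ_self _) hk1))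
    have hB := hsign (k+1) hk1
    have hprod : D.eval (x (k+1)) * D.eval (x k) < 0 := by
      have ht2 : ((-1:ℝ)^(k:ℕ)) * ((-1:ℝ)^(k:ℕ)) = 1 := by
        rw [← pow_add]; exact Even.neg_one_pow ⟨k, rfl⟩
      rw [pow_succ] at hB
      nlinarith
    exact ivt_sign (D.continuous_aeval) (hxlt k (k+1) (Nat.lt_succ_self _) hk1) hprod
  choose r hr1 hr2 using hchoice
  have hrinj : Function.Injective r := by
    have hlt : ∀ j k : Fin m, j < k → r k < r j := by
      intro j k hjk
      have h1 : r k < x k := (hr1 k).2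
      have h2 : x (j+1) < r j := (hr1 j).1
      have h3 : x (k:ℕ) ≤ x ((j:ℕ)+1) := hxle _ _ (by omega) (le_of_lt k.2)
      linarith
    intro a b hab
    rcases lt_trichotomy a b with h | h | h
    · have := hlt a b h; rw [hab] at this; exact absurd this (lt_irrefl _)
    · exact h
    · have := hlt b a h; rw [hab] at this; exact absurd this (lt_irrefl _)
  have hD0 : D = 0 := by
    apply Polynomial.eq_zero_of_natDegree_lt_card_of_eval_eq_zero D hrinj hr2
    simpa using hDdeg
  exact hDne hD0

lemma phi_exists (K : Set ℝ) (hK : IsCompact K) (hne : K.Nonempty) :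
    ∃ φ : ℝ → ℝ, (∀ x y : ℝ, |φ x - φ y| ≤ |x - y|) ∧
      Set.Icc 0 (volume K).toReal ⊆ φ '' K := by
  have hKm : MeasurableSet K := hK.isClosed.measurableSet
  have hKfin : volume K < ⊤ := hK.measure_lt_top
  set φ : ℝ → ℝ := fun x => (volume (K ∩ Set.Iic x)).toReal with hφ_def
  have hfin : ∀ x, volume (K ∩ Set.Iic x) < ⊤ :=
    fun x => lt_of_le_of_lt (measure_mono Set.inter_subset_left) hKfin
  have hsplit : ∀ a b : ℝ, a ≤ b → φ b = φ a + (volume (K ∩ Set.Ioc a b)).toReal := by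
    intro a b hab
    have hun : K ∩ Set.Iic b = (K ∩ Set.Iic a) ∪ (K ∩ Set.Ioc a b) := by
      rw [← Set.inter_union_distrib_left]
      congr 1
      ext t
      simp only [Set.mem_union, Set.mem_Iic, Set.mem_Ioc]
      constructor
      · intro ht; rcases le_or_gt t a with h | h
        · exact Or.inl h
        · exact Or.inr ⟨h, ht⟩
      · rintro (h | ⟨_, h⟩); exact h.trans hab; exact h
    have hdisj : Disjoint (K ∩ Set.Iic a) (K ∩ Set.Ioc a b) := by
      apply Set.disjoint_left.mpr
      rintro t ⟨_, ht1⟩ ⟨_, ht2, _⟩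
      exact absurd ht1 (not_le.mpr ht2)
    rw [hφ_def]
    simp only []
    rw [hun, measure_union hdisj (hKm.inter measurableSet_Ioc),
      ENNReal.toReal_add (hfin a).ne (lt_of_le_of_lt (measure_mono Set.inter_subset_left) hKfin).ne]
  have hmono : Monotone φ := by
    intro a b hab
    rw [hsplit a b hab]
    have := ENNReal.toReal_nonneg (a := volume (K ∩ Set.Ioc a b))
    linarith
  have hlip : ∀ a b : ℝ, a ≤ b → φ b - φ a ≤ b - a := by
    intro a b hab
    rw [hsplit a b hab]
    have h1 : (volume (K ∩ Set.Ioc a b)).toReal ≤ (volume (Set.Ioc a b)).toReal := by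
      apply ENNReal.toReal_mono
      · rw [Real.volume_Ioc]; exact ENNReal.ofReal_ne_top
      · exact measure_mono Set.inter_subset_right
    rw [Real.volume_Ioc, ENNReal.toReal_ofReal (by linarith)] at h1
    linarith
  have hlip' : ∀ x y : ℝ, |φ x - φ y| ≤ |x - y| := by
    intro a b
    rcases le_total a b with h | h
    · rw [abs_sub_comm, abs_of_nonneg (by linarith [hmono h]), abs_sub_comm,
        abs_of_nonneg (by linarith)]
      exact hlip a b h
    · rw [abs_of_nonneg (by linarith [hmono h]), abs_of_nonneg (by linarith)]
      exact hlip b a h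
  refine ⟨φ, hlip', ?_⟩
  set L : ℝ := (volume K).toReal with hL_def
  have hβK : sSup K ∈ K := hK.sSup_mem hne
  have hαK : sInf K ∈ K := hK.sInf_mem hne
  have hφβ : φ (sSup K) = L := by
    rw [hφ_def]
    simp only []
    have hKK : K ∩ Set.Iic (sSup K) = K :=
      Set.inter_eq_left.mpr (fun t ht => le_csSup hK.bddAbove ht)
    rw [hKK]
  have hφα : φ (sInf K) = 0 := by
    rw [hφ_def]
    simp only [ENNReal.toReal_eq_zero_iff]
    left
    have hsub : K ∩ Set.Iic (sInf K) ⊆ {sInf K} := by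
      rintro t ⟨htK, ht⟩
      exact Set.mem_singleton_iff.mpr (le_antisymm ht (csInf_le hK.bddBelow htK))
    exact measure_mono_null hsub (measure_singleton _)
  intro t ht
  obtain ⟨ht0, htL⟩ := ht
  -- x* = sSup {x ∈ K | φ x ≤ t}
  set S : Set ℝ := K ∩ φ ⁻¹' (Set.Iic t) with hS_def
  have hφcont : Continuous φ := by
    apply LipschitzWith.continuous (K := 1)
    intro a b
    rw [edist_dist, edist_dist, ENNReal.coe_one, one_mul]
    apply ENNReal.ofReal_le_ofReal
    rw [Real.dist_eq, Real.dist_eq]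
    exact hlip' a b
  have hScomp : IsCompact S := hK.inter_right (isClosed_Iic.preimage hφcont)
  have hSne : S.Nonempty := ⟨sInf K, hαK, by simp [hφα, ht0]⟩
  set w : ℝ := sSup S with hw_def
  have hwS : w ∈ S := hScomp.sSup_mem hSne
  have hwK : w ∈ K := hwS.1
  have hwt : φ w ≤ t := hwS.2
  refine ⟨w, hwK, ?_⟩
  by_contra hne'
  have hwlt : φ w < t := lt_of_le_of_ne hwt hne'
  -- find a point of K strictly beyond w still in S
  have hwβ : w < sSup K := by
    by_contra hc
    push_neg at hc
    have : sSup K ≤ w := hc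
    have h2 : φ (sSup K) ≤ φ w := hmono this
    rw [hφβ] at h2
    linarith
  have hKne2 : (K ∩ Set.Ioi w).Nonempty := ⟨sSup K, hβK, hwβ⟩
  set v : ℝ := sInf (K ∩ Set.Ioi w) with hv_def
  have hvbdd : BddBelow (K ∩ Set.Ioi w) := hK.bddBelow.mono Set.inter_subset_left
  have hvK : v ∈ K := by
    have : v ∈ closure (K ∩ Set.Ioi w) := csInf_mem_closure hKne2 hvbdd
    have h2 : closure (K ∩ Set.Ioi w) ⊆ closure K := closure_mono Set.inter_subset_left
    rw [hK.isClosed.closure_eq] at h2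
    exact h2 this
  have hwv : w ≤ v := le_csInf hKne2 (fun b hb => le_of_lt hb.2)
  rcases eq_or_lt_of_le hwv with hveq | hvlt
  · -- w is a right accumulation point: pick k ∈ K ∩ Ioi w with k < w + (t - φ w)
    have hlt : sInf (K ∩ Set.Ioi w) < w + (t - φ w) := by
      have hh : sInf (K ∩ Set.Ioi w) = w := hveq.symm
      rw [hh]; linarith
    obtain ⟨k, hkmem, hk⟩ := exists_lt_of_csInf_lt hKne2 hlt
    have hφk : φ k ≤ t := by
      have h1 := hlip w k (le_of_lt hkmem.2)
      linarith
    have : k ≤ w := le_csSup hScomp.bddAbove ⟨hkmem.1, hφk⟩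
    exact absurd hkmem.2 (not_lt.mpr this)
  · -- gap: φ v = φ w
    have hmeas0 : volume (K ∩ Set.Ioc w v) ≤ volume ({v} : Set ℝ) := by
      apply measure_mono
      rintro z ⟨hzK, hz1, hz2⟩
      have : v ≤ z := csInf_le hvbdd ⟨hzK, hz1⟩
      exact Set.mem_singleton_iff.mpr (le_antisymm hz2 this)
    have hφv : φ v = φ w := by
      rw [hsplit w v hwv]
      have : volume (K ∩ Set.Ioc w v) = 0 :=
        le_antisymm (hmeas0.trans_eq (measure_singleton v)) zero_le
      rw [this]
      simp
    have : v ≤ w := le_csSup hScomp.bddAbove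
      ⟨hvK, Set.mem_preimage.mpr (by simp only [Set.mem_Iic, hφv]; exact hwt)⟩
    exact absurd hvlt (not_lt.mpr this)

lemma chebScaled_abs_le (m : ℕ) (e s : ℝ) (hs : 0 < s) (z : ℝ)
    (hz : z ∈ Set.Icc (e - s) (e + s)) : |(chebScaled m e s).eval z| ≤ 2*(s/2)^m := by
  obtain ⟨h1, h2⟩ := hz
  have hb : (z - e)/s ∈ Set.Icc (-1 : ℝ) 1 := by
    constructor
    · rw [le_div_iff₀ hs]; linarith
    · rw [div_le_iff₀ hs]; linarith
  set θ := Real.arccos ((z - e)/s) with hθ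
  have hcos : Real.cos θ = (z - e)/s := Real.cos_arccos hb.1 hb.2
  have hzeq : z = e + s * Real.cos θ := by
    rw [hcos]; field_simp; ring
  rw [hzeq, chebScaled_eval_cos m e s hs.ne', abs_mul]
  have h3 : |Real.cos (m * θ)| ≤ 1 := Real.abs_cos_le_one _
  have h4 : (0:ℝ) ≤ 2*(s/2)^m := by positivity
  rw [abs_of_nonneg h4]
  nlinarith

lemma multiset_prod_map_le {α : Type*} (A : Multiset α) (f g : α → ℝ)
    (hf : ∀ a ∈ A, 0 ≤ f a) (hfg : ∀ a ∈ A, f a ≤ g a) :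
    (A.map f).prod ≤ (A.map g).prod := by
  induction A using Multiset.induction_on with
  | empty => simp
  | cons a A ih =>
    simp only [Multiset.map_cons, Multiset.prod_cons]
    have h1 : (0:ℝ) ≤ (A.map f).prod := by
      apply Multiset.prod_nonneg
      intro x hx
      obtain ⟨b, hb, rfl⟩ := Multiset.mem_map.mp hx
      exact hf b (Multiset.mem_cons_of_mem hb)
    have h2 := ih (fun a ha => hf a (Multiset.mem_cons_of_mem ha))
      (fun a ha => hfg a (Multiset.mem_cons_of_mem ha))
    have h3 := hf a (Multiset.mem_cons_self a A)
    have h4 := hfg a (Multiset.mem_cons_self a A)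
    nlinarith

lemma multiset_abs_prod (A : Multiset ℝ) : |A.prod| = (A.map abs).prod := by
  induction A using Multiset.induction_on with
  | empty => simp
  | cons a A ih => simp [abs_mul, ih]

/-- Pólya's inequality, lower-bound form. -/
lemma polya_key (m : ℕ) (hm : 1 ≤ m) (ρ : ℝ) (hρ : 0 < ρ) (Q : Set ℝ) (hQ : IsCompact Q)
    (hvol : volume Q = ENNReal.ofReal (2*ρ)) (P : ℝ[X]) (hP : P.Monic) (hd : P.natDegree = m)
    (y : ℝ) (hy : ∀ x ∈ Q, |P.eval x| ≤ y) : 2 * (ρ/2)^m ≤ y := by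
  have hQne : Q.Nonempty := by
    rw [Set.nonempty_iff_ne_empty]
    intro h0
    rw [h0, measure_empty] at hvol
    have : ENNReal.ofReal (2*ρ) ≠ 0 := by
      simp only [ne_eq, ENNReal.ofReal_eq_zero, not_le]
      linarith
    exact this hvol.symm
  have hy0 : 0 ≤ y := by
    obtain ⟨x0, hx0⟩ := hQne
    exact le_trans (abs_nonneg _) (hy x0 hx0)
  -- complex roots
  set Pc : ℂ[X] := P.map (algebraMap ℝ ℂ) with hPc_def
  have hPcm : Pc.Monic := hP.map _
  have hsplits : Pc.Splits := IsAlgClosed.splits Pc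
  have hPcdeg : Pc.natDegree = m := by
    rw [hPc_def, Polynomial.natDegree_map_eq_of_injective (algebraMap ℝ ℂ).injective, hd]
  have hcard : Multiset.card Pc.roots = m := by
    rw [← hPcdeg]
    exact (Polynomial.splits_iff_card_roots.mp hsplits)
  have hprodeq : Pc = (Pc.roots.map fun z => X - Polynomial.C z).prod :=
    hsplits.eq_prod_roots_of_monic hPcm
  set A : Multiset ℝ := Pc.roots.map Complex.re with hA_def
  have hAcard : Multiset.card A = m := by rw [hA_def, Multiset.card_map, hcard]
  have habs : ∀ x : ℝ, (A.map fun a => |x - a|).prod ≤ |P.eval x| := by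
    intro x
    have hev : Pc.eval (x : ℂ) = ((P.eval x : ℝ) : ℂ) := by
      rw [hPc_def, Polynomial.eval_map, show ((x:ℂ)) = algebraMap ℝ ℂ x from rfl,
        Polynomial.eval₂_at_apply]
      rfl
    have h1 : ‖Pc.eval (x:ℂ)‖ = |P.eval x| := by
      rw [hev, Complex.norm_real, Real.norm_eq_abs]
    have h2 : Pc.eval (x:ℂ) = (Pc.roots.map fun z => (x:ℂ) - z).prod := by
      conv_lhs => rw [hprodeq]
      rw [Polynomial.eval_multiset_prod, Multiset.map_map]
      congr 1
      apply Multiset.map_congr rfl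
      intro z _
      simp
    have h3 : ‖Pc.eval (x:ℂ)‖ = (Pc.roots.map fun z => ‖(x:ℂ) - z‖).prod := by
      rw [h2]
      exact (map_multiset_prod (normHom (α := ℂ)) _).trans (by rw [Multiset.map_map]; rfl)
    rw [← h1, h3, hA_def, Multiset.map_map]
    apply multiset_prod_map_le
    · intro z _; exact abs_nonneg _
    · intro z _
      show |x - z.re| ≤ ‖(x:ℂ) - z‖
      have : ((x:ℂ) - z).re = x - z.re := by simp
      rw [← this]
      exact Complex.abs_re_le_norm _
  -- the compact set enlarged with the (real parts of) roots
  set K : Set ℝ := Q ∪ (A.toFinset : Set ℝ) with hK_def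
  have hKcomp : IsCompact K := hQ.union (A.toFinset.finite_toSet.isCompact)
  have hKne : K.Nonempty := hQne.mono Set.subset_union_left
  have hyK : ∀ x ∈ K, (A.map fun a => |x - a|).prod ≤ y := by
    rintro x (hx | hx)
    · exact le_trans (habs x) (hy x hx)
    · have hxA : x ∈ A := Multiset.mem_toFinset.mp hx
      have : (A.map fun a => |x - a|).prod = 0 := by
        apply Multiset.prod_eq_zero
        rw [Multiset.mem_map]
        exact ⟨x, hxA, by simp⟩
      rw [this]; exact hy0
  obtain ⟨φ, hφlip, hφsurj⟩ := phi_exists K hKcomp hKne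
  set L : ℝ := (volume K).toReal with hL_def
  have hLρ : 2*ρ ≤ L := by
    have h1 : volume Q ≤ volume K := measure_mono Set.subset_union_left
    have h2 := ENNReal.toReal_mono hKcomp.measure_lt_top.ne h1
    rw [hvol, ENNReal.toReal_ofReal (by linarith)] at h2
    exact h2
  have hL0 : 0 < L := by linarith
  set B : Multiset ℝ := A.map φ with hB_def
  set R : ℝ[X] := (B.map fun b => X - Polynomial.C b).prod with hR_def
  have hRmonic : R.Monic := by
    apply Polynomial.monic_multiset_prod_of_monic
    intro b _
    exact Polynomial.monic_X_sub_C b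
  have hRdeg : R.natDegree = m := by
    have hmon : ∀ f ∈ B.map (fun b => (X : ℝ[X]) - Polynomial.C b), f.Monic := by
      intro f hf
      obtain ⟨b, _, rfl⟩ := Multiset.mem_map.mp hf
      exact Polynomial.monic_X_sub_C b
    rw [hR_def, Polynomial.natDegree_multiset_prod_of_monic _ hmon, Multiset.map_map]
    simp only [Function.comp_def]
    have : (B.map fun b => ((X : ℝ[X]) - Polynomial.C b).natDegree) = B.map fun _ => 1 := by
      apply Multiset.map_congr rfl
      intro b _
      exact Polynomial.natDegree_X_sub_C b
    rw [this, Multiset.map_const', Multiset.sum_replicate, smul_eq_mul, mul_one,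
      hB_def, Multiset.card_map, hAcard]
  have hRle : ∀ t ∈ Set.Icc 0 L, |R.eval t| ≤ y := by
    intro t ht
    obtain ⟨x, hxK, rfl⟩ := hφsurj ht
    have hev : R.eval (φ x) = (B.map fun b => φ x - b).prod := by
      rw [hR_def, Polynomial.eval_multiset_prod, Multiset.map_map]
      congr 1
      apply Multiset.map_congr rfl
      intro b _
      simp
    rw [hev, multiset_abs_prod, Multiset.map_map]
    calc (B.map fun b => |φ x - b|).prod
        ≤ (A.map fun a => |x - a|).prod := by
          rw [hB_def, Multiset.map_map]
          apply multiset_prod_map_le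
          · intro a _; exact abs_nonneg _
          · intro a _; exact hφlip x a
      _ ≤ y := hyK x hxK
  obtain ⟨t, htmem, htge⟩ := cheb_lower m hm 0 L hL0 R hRmonic hRdeg
  have h1 := hRle t htmem
  have h2 : 2 * (ρ/2)^m ≤ 2 * ((L - 0)/4)^m := by
    have : ρ/2 ≤ (L - 0)/4 := by linarith
    have h0 : (0:ℝ) ≤ ρ/2 := by linarith
    have := pow_le_pow_left₀ h0 this m
    linarith
  linarith

lemma polya_sup (m : ℕ) (hm : 1 ≤ m) (ρ : ℝ) (hρ : 0 < ρ) (Q : Set ℝ) (hQ : IsCompact Q)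
    (hvol : volume Q = ENNReal.ofReal (2*ρ)) (P : ℝ[X]) (hP : P.Monic) (hd : P.natDegree = m) :
    2 * (ρ/2)^m ≤ ⨆ x ∈ Q, |P.eval x| := by
  have hQne : Q.Nonempty := by
    rw [Set.nonempty_iff_ne_empty]
    intro h0
    rw [h0, measure_empty] at hvol
    have : ENNReal.ofReal (2*ρ) ≠ 0 := by
      simp only [ne_eq, ENNReal.ofReal_eq_zero, not_le]; linarith
    exact this hvol.symm
  have hcont : Continuous fun x : ℝ => |P.eval x| := (P.continuous_aeval).abs
  obtain ⟨z, hzQ, hz⟩ := hQ.exists_isMaxOn hQne hcont.continuousOn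
  have hub : ∀ x ∈ Q, |P.eval x| ≤ |P.eval z| := hz
  have hkey := polya_key m hm ρ hρ Q hQ hvol P hP hd _ hub
  refine le_trans hkey ?_
  have hbdd : BddAbove (Set.range fun x : ℝ => ⨆ (_ : x ∈ Q), |P.eval x|) := by
    refine ⟨|P.eval z|, ?_⟩
    rintro r ⟨x, rfl⟩
    dsimp only
    by_cases hx : x ∈ Q
    · rw [ciSup_pos hx]; exact hub x hx
    · have : IsEmpty (x ∈ Q) := ⟨hx⟩
      rw [Real.iSup_of_isEmpty]
      exact abs_nonneg _
  have h1 : (⨆ (_ : z ∈ Q), |P.eval z|) ≤ ⨆ x ∈ Q, |P.eval x| := le_ciSup hbdd z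
  rw [ciSup_pos hzQ] at h1
  exact h1

theorem stmt_19 (m : ℕ) (hm : 1 ≤ m) (ρ : ℝ) (hρ : 0 < ρ) :
    (∀ Q : Set ℝ, IsCompact Q → volume Q = ENNReal.ofReal (2 * ρ) →
      ∀ P : Polynomial ℝ, P.Monic → P.natDegree = m →
        2 * (ρ / 2) ^ m ≤ ⨆ x ∈ Q, |P.eval x|) ∧
    ∀ a : ℝ,
      sInf {M : ℝ | ∃ P : Polynomial ℝ, P.Monic ∧ P.natDegree = m ∧
          M = ⨆ x ∈ Set.Icc a (a + 2 * ρ), |P.eval x|}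
        = 2 * (ρ / 2) ^ m := by
  constructor
  · intro Q hQ hvol P hP hd
    exact polya_sup m hm ρ hρ Q hQ hvol P hP hd
  · intro a
    set β : ℝ := 2 * (ρ/2)^m with hβ_def
    have hβpos : 0 < β := by positivity
    set S : Set ℝ := {M : ℝ | ∃ P : Polynomial ℝ, P.Monic ∧ P.natDegree = m ∧
          M = ⨆ x ∈ Set.Icc a (a + 2 * ρ), |P.eval x|} with hS_def
    set Cp : ℝ[X] := chebScaled m (a + ρ) ρ with hCp_def
    have hIcc : Set.Icc a (a + 2*ρ) = Set.Icc ((a+ρ) - ρ) ((a+ρ) + ρ) := by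
      congr 1 <;> ring
    -- the sup of |Cp| on the interval is β
    have hble : ∀ x ∈ Set.Icc a (a + 2*ρ), |Cp.eval x| ≤ β := by
      intro x hx
      rw [hIcc] at hx
      exact chebScaled_abs_le m (a+ρ) ρ hρ x hx
    have hattain : Cp.eval (a + 2*ρ) = β := by
      have h1 : a + 2*ρ = (a + ρ) + ρ * Real.cos 0 := by rw [Real.cos_zero]; ring
      rw [h1, hCp_def, chebScaled_eval_cos m (a+ρ) ρ hρ.ne', mul_zero, Real.cos_zero, mul_one]
    have hmem : a + 2*ρ ∈ Set.Icc a (a + 2*ρ) := by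
      constructor <;> nlinarith
    have hbdd : BddAbove (Set.range fun x : ℝ => ⨆ (_ : x ∈ Set.Icc a (a+2*ρ)), |Cp.eval x|) := by
      refine ⟨β, ?_⟩
      rintro r ⟨x, rfl⟩
      dsimp only
      by_cases hx : x ∈ Set.Icc a (a+2*ρ)
      · rw [ciSup_pos hx]; exact hble x hx
      · have : IsEmpty (x ∈ Set.Icc a (a+2*ρ)) := ⟨hx⟩
        rw [Real.iSup_of_isEmpty]
        exact le_of_lt hβpos
    have hsup : (⨆ x ∈ Set.Icc a (a + 2*ρ), |Cp.eval x|) = β := by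
      apply le_antisymm
      · apply ciSup_le
        intro x
        by_cases hx : x ∈ Set.Icc a (a+2*ρ)
        · rw [ciSup_pos hx]; exact hble x hx
        · have : IsEmpty (x ∈ Set.Icc a (a+2*ρ)) := ⟨hx⟩
          rw [Real.iSup_of_isEmpty]
          exact le_of_lt hβpos
      · have h1 : (⨆ (_ : (a+2*ρ) ∈ Set.Icc a (a+2*ρ)), |Cp.eval (a+2*ρ)|) ≤
            ⨆ x ∈ Set.Icc a (a+2*ρ), |Cp.eval x| := le_ciSup hbdd (a+2*ρ)
        rw [ciSup_pos hmem, hattain, abs_of_pos hβpos] at h1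
        exact h1
    have hvolIcc : volume (Set.Icc a (a + 2*ρ)) = ENNReal.ofReal (2*ρ) := by
      rw [Real.volume_Icc]; congr 1; ring
    have hlb : ∀ M ∈ S, β ≤ M := by
      rintro M ⟨P, hPm, hPd, rfl⟩
      exact polya_sup m hm ρ hρ _ isCompact_Icc hvolIcc P hPm hPd
    have hmemS : β ∈ S := by
      refine ⟨Cp, chebScaled_monic m hm (a+ρ) ρ hρ, chebScaled_natDegree m hm (a+ρ) ρ hρ, ?_⟩
      exact hsup.symm
    exact le_antisymm (csInf_le ⟨β, hlb⟩ hmemS) (le_csInf ⟨β, hmemS⟩ hlb)
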